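/- Every positive integer can be written uniquely as a sum of non-adjacent Fibonacci numbers (Zeckendorf's theorem). -/

import Mathlib

/-- Fibonacci numbers normalized so that `Fib 1 = 1`, `Fib 2 = 2`,
`Fib (n+1) = Fib n + Fib (n-1)`. -/
def Fib (n : ℕ) : ℕ := Nat.fib (n + 1)

lemma Fib_pos (n : ℕ) : 0 < Fib n := Nat.fib_pos.mpr n.succ_pos

lemma Fib_mono {a b : ℕ} (h : a ≤ b) : Fib a ≤ Fib b :=
  Nat.fib_mono (by omega)

lemma Fib_rec (j : ℕ) : Fib (j + 2) = Fib (j + 1) + Fib j := by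
  show Nat.fib (j + 1 + 2) = Nat.fib (j + 1 + 1) + Nat.fib (j + 1)
  rw [Nat.fib_add_two, Nat.add_comm]

lemma le_Fib (n : ℕ) : n ≤ Fib n := by
  induction n with
  | zero => simp [Fib]
  | succ n ih =>
    rcases n with _ | m
    · simp [Fib]
    · have h : Fib (m + 1 + 1) = Fib (m + 1) + Fib m := Fib_rec m
      have h1 : 0 < Fib m := Fib_pos m
      omega

/-- Bound: a non-adjacent sum with indices in `[1, k]` is `< Fib (k+1)`. -/
lemma zeck_sum_lt (k : ℕ) : ∀ s : Finset ℕ, (∀ i ∈ s, 1 ≤ i) →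
    (∀ i ∈ s, ∀ j ∈ s, i < j → i + 1 < j) →
    (∀ i ∈ s, i ≤ k) → ∑ i ∈ s, Fib i < Fib (k + 1) := by
  induction k using Nat.strong_induction_on with
  | _ k ih =>
    intro s h1 hadj hb
    rcases s.eq_empty_or_nonempty with rfl | hne
    · simpa using Fib_pos (k + 1)
    · obtain ⟨M, hM⟩ : ∃ M, s.max' hne = M := ⟨_, rfl⟩
      have hMs : M ∈ s := hM ▸ s.max'_mem hne
      have hMmax : ∀ i ∈ s, i ≤ M := fun i hi => hM ▸ s.le_max' i hi
      have hMk : M ≤ k := hb M hMs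
      have hM1 : 1 ≤ M := h1 M hMs
      have hrest : ∀ i ∈ s.erase M, i ≤ M - 2 := by
        intro i hi
        have hi' := Finset.mem_of_mem_erase hi
        have hneq := Finset.ne_of_mem_erase hi
        have hlt : i < M := lt_of_le_of_ne (hMmax i hi') hneq
        have := hadj i hi' M hMs hlt
        omega
      have hsum : ∑ i ∈ s, Fib i = Fib M + ∑ i ∈ s.erase M, Fib i :=
        (Finset.add_sum_erase _ _ hMs).symm
      rcases Nat.lt_or_ge M 2 with hM2 | hM2
      · -- M = 1, erased set is empty
        have he : s.erase M = ∅ := by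
          rcases Finset.eq_empty_or_nonempty (s.erase M) with h | h
          · exact h
          · obtain ⟨i, hi⟩ := h
            have := hrest i hi
            have := h1 i (Finset.mem_of_mem_erase hi)
            omega
        have hs : ∑ i ∈ s, Fib i = Fib M := by rw [hsum, he]; simp
        rw [hs]
        calc Fib M < Fib (M + 1) := by
              have : M = 1 := by omega
              subst this; decide
          _ ≤ Fib (k + 1) := Fib_mono (by omega)
      · -- M ≥ 2
        have hrec : ∑ i ∈ s.erase M, Fib i < Fib (M - 2 + 1) := by
          apply ih (M - 2) (by omega)
          · intro i hi; exact h1 i (Finset.mem_of_mem_erase hi)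
          · intro i hi j hj hij
            exact hadj i (Finset.mem_of_mem_erase hi) j (Finset.mem_of_mem_erase hj) hij
          · exact hrest
        have hfib : Fib M + Fib (M - 1) = Fib (M + 1) := by
          have h := Fib_rec (M - 2)
          have e1 : M - 2 + 2 = M + 1 - 1 := by omega
          have e2 : M - 2 + 1 = M - 1 := by omega
          have h' := Fib_rec (M - 1)
          have e3 : M - 1 + 2 = M + 1 := by omega
          have e4 : M - 1 + 1 = M := by omega
          rw [e3, e4] at h'
          omega
        have h2 : M - 2 + 1 = M - 1 := by omega
        rw [hsum]
        calc Fib M + ∑ i ∈ s.erase M, Fib i < Fib M + Fib (M - 1) := by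
              rw [← h2]; omega
          _ = Fib (M + 1) := hfib
          _ ≤ Fib (k + 1) := Fib_mono (by omega)

lemma zeck_exists : ∀ m : ℕ, ∃ s : Finset ℕ, (∀ i ∈ s, 1 ≤ i) ∧
    (∀ i ∈ s, ∀ j ∈ s, i < j → i + 1 < j) ∧ m = ∑ i ∈ s, Fib i := by
  intro m
  induction m using Nat.strong_induction_on with
  | _ m ih =>
    rcases Nat.eq_zero_or_pos m with rfl | hm
    · exact ⟨∅, by simp⟩
    obtain ⟨k, hk⟩ : ∃ k, Nat.findGreatest (fun k => Fib k ≤ m) m = k := ⟨_, rfl⟩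
    have hP1 : Fib 1 ≤ m := by simp [Fib]; omega
    have hk1 : 1 ≤ k := hk ▸ Nat.le_findGreatest (m := 1) (by omega) hP1
    have hkm : Fib k ≤ m := by
      have := Nat.findGreatest_spec (P := fun k => Fib k ≤ m) (m := 1) (n := m)
        (by omega) hP1
      rwa [hk] at this
    have hupper : m < Fib (k + 1) := by
      rcases Nat.lt_or_ge m (k + 1) with h | h
      · exact lt_of_lt_of_le h (le_Fib (k + 1))
      · have := Nat.findGreatest_is_greatest (P := fun k => Fib k ≤ m)
          (k := k + 1) (n := m) (by omega) h
        simp only [not_le] at this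
        omega
    have hfib : Fib (k + 1) = Fib k + Fib (k - 1) := by
      have h := Fib_rec (k - 1)
      have e1 : k - 1 + 2 = k + 1 := by omega
      have e2 : k - 1 + 1 = k := by omega
      rw [e1, e2] at h
      exact h
    obtain ⟨s', hs1, hs2, hs3⟩ := ih (m - Fib k) (by have := Fib_pos k; omega)
    have hrlt : m - Fib k < Fib (k - 1) := by omega
    have hsmall : ∀ i ∈ s', i + 1 < k := by
      intro i hi
      by_contra hcon
      have h1 : Fib (k - 1) ≤ Fib i := Fib_mono (by omega)
      have h2 : Fib i ≤ ∑ j ∈ s', Fib j :=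
        Finset.single_le_sum (fun _ _ => Nat.zero_le _) hi
      omega
    have hknot : k ∉ s' := fun h => by have := hsmall k h; omega
    refine ⟨insert k s', ?_, ?_, ?_⟩
    · intro i hi
      rcases Finset.mem_insert.mp hi with rfl | hi
      · exact hk1
      · exact hs1 i hi
    · intro i hi j hj hij
      rcases Finset.mem_insert.mp hi with hik | hi' <;>
        rcases Finset.mem_insert.mp hj with hjk | hj'
      · omega
      · have := hsmall j hj'; omega
      · have := hsmall i hi'; omega
      · exact hs2 i hi' j hj' hij
    · rw [Finset.sum_insert hknot]; omega

lemma zeck_unique : ∀ m : ℕ, ∀ s t : Finset ℕ,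
    ((∀ i ∈ s, 1 ≤ i) ∧ (∀ i ∈ s, ∀ j ∈ s, i < j → i + 1 < j) ∧ m = ∑ i ∈ s, Fib i) →
    ((∀ i ∈ t, 1 ≤ i) ∧ (∀ i ∈ t, ∀ j ∈ t, i < j → i + 1 < j) ∧ m = ∑ i ∈ t, Fib i) →
    s = t := by
  intro m
  induction m using Nat.strong_induction_on with
  | _ m ih =>
    intro s t ⟨hs1, hs2, hs3⟩ ⟨ht1, ht2, ht3⟩
    rcases Nat.eq_zero_or_pos m with rfl | hm
    · have hse : s = ∅ := by
        rcases s.eq_empty_or_nonempty with h | ⟨i, hi⟩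
        · exact h
        · exfalso
          have : Fib i ≤ ∑ j ∈ s, Fib j :=
            Finset.single_le_sum (fun _ _ => Nat.zero_le _) hi
          have := Fib_pos i
          omega
      have hte : t = ∅ := by
        rcases t.eq_empty_or_nonempty with h | ⟨i, hi⟩
        · exact h
        · exfalso
          have : Fib i ≤ ∑ j ∈ t, Fib j :=
            Finset.single_le_sum (fun _ _ => Nat.zero_le _) hi
          have := Fib_pos i
          omega
      rw [hse, hte]
    · have hsne : s.Nonempty := by
        rcases s.eq_empty_or_nonempty with rfl | h
        · simp at hs3; omega
        · exact h
      have htne : t.Nonempty := by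
        rcases t.eq_empty_or_nonempty with rfl | h
        · simp at ht3; omega
        · exact h
      obtain ⟨M, hM⟩ : ∃ M, s.max' hsne = M := ⟨_, rfl⟩
      obtain ⟨N, hN⟩ : ∃ N, t.max' htne = N := ⟨_, rfl⟩
      have hMs : M ∈ s := hM ▸ s.max'_mem hsne
      have hNt : N ∈ t := hN ▸ t.max'_mem htne
      have hMle : Fib M ≤ m := hs3 ▸ Finset.single_le_sum (fun _ _ => Nat.zero_le _) hMs
      have hNle : Fib N ≤ m := ht3 ▸ Finset.single_le_sum (fun _ _ => Nat.zero_le _) hNt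
      have hMlt : m < Fib (M + 1) := by
        rw [hs3]
        exact zeck_sum_lt M s hs1 hs2 (fun i hi => hM ▸ s.le_max' i hi)
      have hNlt : m < Fib (N + 1) := by
        rw [ht3]
        exact zeck_sum_lt N t ht1 ht2 (fun i hi => hN ▸ t.le_max' i hi)
      have hMN : M = N := by
        by_contra h
        rcases Nat.lt_or_ge M N with hlt | hge
        · have : Fib (M + 1) ≤ Fib N := Fib_mono (by omega)
          omega
        · have hlt : N < M := by omega
          have : Fib (N + 1) ≤ Fib M := Fib_mono (by omega)
          omega
      subst hMN
      have key : s.erase M = t.erase M := by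
        apply ih (m - Fib M) (by have := Fib_pos M; omega)
        · refine ⟨fun i hi => hs1 i (Finset.mem_of_mem_erase hi),
            fun i hi j hj hij => hs2 i (Finset.mem_of_mem_erase hi) j
              (Finset.mem_of_mem_erase hj) hij, ?_⟩
          have := (Finset.add_sum_erase _ Fib hMs).symm
          omega
        · refine ⟨fun i hi => ht1 i (Finset.mem_of_mem_erase hi),
            fun i hi j hj hij => ht2 i (Finset.mem_of_mem_erase hi) j
              (Finset.mem_of_mem_erase hj) hij, ?_⟩
          have := (Finset.add_sum_erase _ Fib hNt).symm
          omega
      have hins : insert M (s.erase M) = insert M (t.erase M) := by rw [key]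
      rwa [Finset.insert_erase hMs, Finset.insert_erase hNt] at hins

/-- **Zeckendorf's theorem.** Every positive integer can be written uniquely as a
sum of non-adjacent Fibonacci numbers. -/
theorem zeckendorf (m : ℕ) (hm : 0 < m) :
    ∃! s : Finset ℕ,
      (∀ i ∈ s, 1 ≤ i) ∧
      (∀ i ∈ s, ∀ j ∈ s, i < j → i + 1 < j) ∧
      m = ∑ i ∈ s, Fib i := by
  obtain ⟨s, hs⟩ := zeck_exists m
  exact ⟨s, hs, fun t ht => zeck_unique m t s ht hs⟩
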